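/- arXiv:math/0201041 — 5 statements merged into one kernel-verified Lean document; each statement's English description precedes it below -/
import Mathlib

section
/- A strictly increasing sequence (column) C of letters from the alphabet C_n = {1 < 2 < ... < n < n̄ < ... < 1̄} is KN-admissible (i.e., for every pair (z, z̄) of letters occurring in C at positions p < q one has q - p ≥ h(C) - z + 1, where h(C) is the length of C) if and only if for every m in {1,...,n}, the number N(m) of letters x in C with x ≤ m or x ≥ m̄ satisfies N(m) ≤ m. -/
/-! Letters of `C_n = {1 < ... < n < n̄ < ... < 1̄}` are encoded as natural
numbers in `[1, 2n]`: the unbarred letter `m` is `m` and the barred letter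
`m̄` is `2n+1-m`. -/

/-- A column over `C_n`: a strictly increasing list of letters of `C_n`. -/
def IsColumn (n : ℕ) (C : List ℕ) : Prop :=
  C.Chain' (· < ·) ∧ ∀ x ∈ C, 1 ≤ x ∧ x ≤ 2*n

/-- `N(m)`: the number of entries `x` of `C` with `x ≤ m` or `x ≥ m̄`. -/
def Ncount (n m : ℕ) (C : List ℕ) : ℕ :=
  (C.filter (fun x => decide (x ≤ m ∨ 2*n+1-m ≤ x))).length

/-- KN-admissibility via the counting condition `N(m) ≤ m` for all `m ≤ n`. -/
def KNAdmissible (n : ℕ) (C : List ℕ) : Prop :=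
  ∀ m, 1 ≤ m → m ≤ n → Ncount n m C ≤ m

/-- KN-coadmissibility: for each pair `(z, z̄)` occurring in the column,
the number of entries `x` with `z ≤ x ≤ z̄` is at most `n - z + 1`. -/
def Coadmissible (n : ℕ) (C : List ℕ) : Prop :=
  ∀ z, 1 ≤ z → z ≤ n → z ∈ C → (2*n+1-z) ∈ C →
    (C.filter (fun x => decide (z ≤ x ∧ x ≤ 2*n+1-z))).length ≤ n - z + 1

/-- The set `I = {z_1 > z_2 > ...}` of unbarred letters `z` such that both
`z` and `z̄` occur in `C`, listed in decreasing order. -/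
def dupList (n : ℕ) (C : List ℕ) : List ℕ :=
  ((List.range (n+1)).filter (fun z => decide (1 ≤ z ∧ z ∈ C ∧ (2*n+1-z) ∈ C))).reverse

/-- `t` is an unbarred letter `< bound` such that neither `t` nor `t̄` occurs in `C`. -/
def FreeLt (n : ℕ) (C : List ℕ) (bound t : ℕ) : Prop :=
  1 ≤ t ∧ t < bound ∧ t ∉ C ∧ (2*n+1-t) ∉ C

/-- `J = {t_1 > ... > t_r}` is the splitting set of `C`: `t_1` is the greatest
letter `< z_1` free in `C`, and `t_i` is the greatest letter `< min(t_{i-1}, z_i)`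
free in `C`. -/
def IsSplittingSet (n : ℕ) (C J : List ℕ) : Prop :=
  J.length = (dupList n C).length ∧
  ∀ i < J.length,
    FreeLt n C (if i = 0 then (dupList n C).getD 0 0
                else min (J.getD (i-1) 0) ((dupList n C).getD i 0)) (J.getD i 0) ∧
    ∀ s, FreeLt n C (if i = 0 then (dupList n C).getD 0 0
                else min (J.getD (i-1) 0) ((dupList n C).getD i 0)) s → s ≤ J.getD i 0

/-- `C` can be split. -/
def CanSplit (n : ℕ) (C : List ℕ) : Prop := ∃ J, IsSplittingSet n C J

/-- `lC`: replace each duplicated unbarred letter `z_i` by `t_i` and reorder. -/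
def lCol (n : ℕ) (C I J : List ℕ) : List ℕ :=
  List.insertionSort (· ≤ ·)
    (C.map fun x => if x ∈ I ∧ x ≤ n then J.getD (I.idxOf x) x else x)

/-- `rC`: replace each duplicated barred letter `z̄_i` by `t̄_i` and reorder. -/
def rCol (n : ℕ) (C I J : List ℕ) : List ℕ :=
  List.insertionSort (· ≤ ·)
    (C.map fun x => if (2*n+1-x) ∈ I ∧ n < x then 2*n+1 - J.getD (I.idxOf (2*n+1-x)) (2*n+1-x) else x)

/-- `C*`: the column made of the unbarred letters of `lC` followed by the
barred letters of `rC`. -/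
def starCol (n : ℕ) (C I J : List ℕ) : List ℕ :=
  (lCol n C I J).filter (fun x => decide (x ≤ n)) ++
  (rCol n C I J).filter (fun x => decide (n < x))

open Classical in
noncomputable def theSplit (n : ℕ) (C : List ℕ) : List ℕ :=
  if h : CanSplit n C then h.choose else []

noncomputable def lC (n : ℕ) (C : List ℕ) : List ℕ := lCol n C (dupList n C) (theSplit n C)
noncomputable def rC (n : ℕ) (C : List ℕ) : List ℕ := rCol n C (dupList n C) (theSplit n C)

/-- The map `Φ : C ↦ C*` from admissible to coadmissible columns. -/
noncomputable def PhiMap (n : ℕ) (C : List ℕ) : List ℕ :=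
  starCol n C (dupList n C) (theSplit n C)

/-- `w` is a non-admissible column word all of whose strict factors are admissible. -/
def MinimalNonAdm (n : ℕ) (w : List ℕ) : Prop :=
  IsColumn n w ∧ ¬ KNAdmissible n w ∧
  ∀ u, u <:+: w → u.length < w.length → KNAdmissible n u

/-- The lowest unbarred letter `z` with `(z, z̄)` in `w` and `N(z) = z + 1`. -/
def badLetter (n : ℕ) (w : List ℕ) : ℕ :=
  (((List.range (n+1)).filter (fun z =>
      decide (1 ≤ z ∧ z ∈ w ∧ (2*n+1-z) ∈ w ∧ Ncount n z w = z+1)))).headD 0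

/-- `w̃`: the word obtained from `w` by erasing the pair `(z, z̄)`, `z = badLetter`. -/
def contract (n : ℕ) (w : List ℕ) : List ℕ :=
  w.filter (fun x => decide (x ≠ badLetter n w ∧ x ≠ 2*n+1 - badLetter n w))

/-! ### Crystal operators via the signature rule. -/

/-- The `i`-signature of `w`: `+` (true) for letters `i`, `(i+1)bar`; `−` (false)
for letters `i+1`, `ī`; each with its position in `w`. -/
def sigList (n i : ℕ) (w : List ℕ) : List (Bool × ℕ) :=
  (w.zipIdx.map Prod.swap).filterMap (fun p =>
    if p.2 = i ∨ p.2 = 2*n - i then some (true, p.1)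
    else if p.2 = i+1 ∨ p.2 = 2*n+1-i then some (false, p.1)
    else none)

/-- One step of the `+−` cancellation, using a stack. -/
def reduceStep (st : List (Bool × ℕ)) (it : Bool × ℕ) : List (Bool × ℕ) :=
  match st, it with
  | (true, _) :: rest, (false, _) => rest
  | _, _ => it :: st

/-- The reduced signature `ρ_i(w) = −^r +^s` (with positions). -/
def reducedSig (l : List (Bool × ℕ)) : List (Bool × ℕ) := (l.foldl reduceStep []).reverse

/-- Kashiwara operator `f̃_i` on words (`none` encodes `0`). -/
def fOp (n i : ℕ) (w : List ℕ) : Option (List ℕ) :=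
  match (reducedSig (sigList n i w)).find? (fun s => s.1) with
  | some s => some (w.set s.2 (if w.getD s.2 0 = i then i+1 else 2*n+1-i))
  | none => none

/-- Kashiwara operator `ẽ_i` on words (`none` encodes `0`). -/
def eOp (n i : ℕ) (w : List ℕ) : Option (List ℕ) :=
  match ((reducedSig (sigList n i w)).reverse.find? (fun s => !s.1)) with
  | some s => some (w.set s.2 (if w.getD s.2 0 = i+1 then i else 2*n - i))
  | none => none

/-- `ε_i(w)`. -/
def epsC (n i : ℕ) (w : List ℕ) : ℕ :=
  ((reducedSig (sigList n i w)).filter (fun s => !s.1)).length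

/-- `φ_i(w)`. -/
def phiC (n i : ℕ) (w : List ℕ) : ℕ :=
  ((reducedSig (sigList n i w)).filter (fun s => s.1)).length

/-- One crystal edge of some color `i ∈ {1,...,n}` (in either direction). -/
def CrystalStep (n : ℕ) (w w' : List ℕ) : Prop :=
  ∃ i, 1 ≤ i ∧ i ≤ n ∧ (fOp n i w = some w' ∨ eOp n i w = some w')

/-- Same connected component of the crystal graph `G_n`. -/
def SameComp (n : ℕ) : List ℕ → List ℕ → Prop := Relation.EqvGen (CrystalStep n)

/-- One crystal edge of color `i ∈ {1,...,n−1}` (the `U_q(sl_n)` structure). -/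
def CrystalStepA (n : ℕ) (w w' : List ℕ) : Prop :=
  ∃ i, 1 ≤ i ∧ i + 1 ≤ n ∧ (fOp n i w = some w' ∨ eOp n i w = some w')

/-- Same `U_q(sl_n)`-connected component (arrows of color `n` removed). -/
def SameCompA (n : ℕ) : List ℕ → List ℕ → Prop := Relation.EqvGen (CrystalStepA n)

/-- Highest weight vertex: `ẽ_i(w) = 0` for all `i = 1,...,n`. -/
def HighestWt (n : ℕ) (w : List ℕ) : Prop := ∀ i, 1 ≤ i → i ≤ n → eOp n i w = none

/-- The weight `d(w)`: `d_i = #(i in w) − #(ī in w)`. -/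
def wt (n : ℕ) (w : List ℕ) (i : ℕ) : ℤ := (w.count i : ℤ) - (w.count (2*n+1-i) : ℤ)

/-- Apply the sequence of operators `f̃_{i}` for `i ∈ l` successively. -/
def applyF (n : ℕ) (l : List ℕ) (w : List ℕ) : Option (List ℕ) :=
  l.foldl (fun ow i => ow.bind (fOp n i)) (some w)

/-- `w1 ∼ w2`: same place in two isomorphic connected components of `G_n`. -/
def SamePlace (n : ℕ) (w1 w2 : List ℕ) : Prop :=
  ∃ w10 w20 l, HighestWt n w10 ∧ HighestWt n w20 ∧
    (∀ i, 1 ≤ i → i ≤ n → wt n w10 i = wt n w20 i) ∧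
    (∀ i ∈ l, 1 ≤ i ∧ i ≤ n) ∧
    applyF n l w10 = some w1 ∧ applyF n l w20 = some w2

/-! ### The plactic relations. -/

/-- The relations `R1` and `R2` (on bare length-3 words). -/
inductive KnuthRel (n : ℕ) : List ℕ → List ℕ → Prop
  | R1a (x y z : ℕ) : 1 ≤ x → x ≤ y → y < z → z ≤ 2*n → z ≠ 2*n+1-x →
      KnuthRel n [y,z,x] [y,x,z]
  | R1b (x y z : ℕ) : 1 ≤ x → x < y → y ≤ z → z ≤ 2*n → z ≠ 2*n+1-x →
      KnuthRel n [x,z,y] [z,x,y]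
  | R2a (x y : ℕ) : 1 < x → x ≤ n → x ≤ y → y ≤ 2*n+1-x →
      KnuthRel n [y, 2*n+2-x, x-1] [y, x, 2*n+1-x]
  | R2b (x y : ℕ) : 1 < x → x ≤ n → x ≤ y → y ≤ 2*n+1-x →
      KnuthRel n [x, 2*n+1-x, y] [2*n+2-x, x-1, y]

/-- One rewriting step, in context, by `R1`, `R2` or the contraction `R3`. -/
inductive PlStep (n : ℕ) : List ℕ → List ℕ → Prop
  | knuth (u v w w' : List ℕ) : KnuthRel n w w' → PlStep n (u++w++v) (u++w'++v)
  | contr (u v w : List ℕ) : MinimalNonAdm n w → PlStep n (u++w++v) (u++(contract n w)++v)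

/-- The plactic congruence of `Pl(C_n)`. -/
def Plactic (n : ℕ) : List ℕ → List ℕ → Prop := Relation.EqvGen (PlStep n)

/-- One rewriting step in context using only `R1` and `R2`. -/
inductive Pl12Step (n : ℕ) : List ℕ → List ℕ → Prop
  | knuth (u v w w' : List ℕ) : KnuthRel n w w' → Pl12Step n (u++w++v) (u++w'++v)

/-- The congruence generated by `R1` and `R2` only. -/
def Plactic12 (n : ℕ) : List ℕ → List ℕ → Prop := Relation.EqvGen (Pl12Step n)

/-- Relation on `Option`s: `none ↔ none`, `some ↔ some` related values. -/
def OptRel (r : List ℕ → List ℕ → Prop) : Option (List ℕ) → Option (List ℕ) → Prop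
  | none, none => True
  | some a, some b => r a b
  | _, _ => False

/-! ### Symplectic tableaux. -/

/-- `C ≤ D` for columns with `h(C) ≥ h(D)`: rows of `CD` weakly increasing. -/
def ColLe (C D : List ℕ) : Prop :=
  D.length ≤ C.length ∧ ∀ k < D.length, C.getD k 0 ≤ D.getD k 0

/-- A symplectic tableau: a list of admissible columns, left to right, with
`rC_i ≤ lC_{i+1}` (Sheats' description of the KN conditions). -/
def IsSympTab (n : ℕ) (T : List (List ℕ)) : Prop :=
  (∀ C ∈ T, IsColumn n C ∧ KNAdmissible n C) ∧
  T.Chain' (fun C D => ColLe (rC n C) (lC n D))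

/-- The reading of a tableau: columns from right to left, top to bottom. -/
def reading (T : List (List ℕ)) : List ℕ := T.reverse.foldr (· ++ ·) []

/-- Number of boxes in row `k` (0-based) of the shape of `T`. -/
def rowLenF (T : List (List ℕ)) (k : ℕ) : ℕ :=
  (T.filter (fun C => decide (k < C.length))).length

/-- `g` is obtained from `f` by adding exactly one box (in some row). -/
def AddOneBox (f g : ℕ → ℕ) : Prop := ∃ j, g j = f j + 1 ∧ ∀ k, k ≠ j → g k = f k

/-- Two diagrams differ by exactly one box. -/
def DiffOneBox (f g : ℕ → ℕ) : Prop := AddOneBox f g ∨ AddOneBox g f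

/-- An `n`-oscillating tableau of length `l` (diagrams as row-length functions,
normalized to `0` outside `{1,...,l}`). -/
def IsOscTab (n l : ℕ) (Q : ℕ → ℕ → ℕ) : Prop :=
  (∀ k, Q 0 k = 0) ∧ (∀ i, l < i → ∀ k, Q i k = 0) ∧
  (∀ i < l, DiffOneBox (Q i) (Q (i+1))) ∧
  (∀ i k, Q i (k+1) ≤ Q i k) ∧
  (∀ i k, n ≤ k → Q i k = 0)

lemma ncount_eq_countP (n m : ℕ) (C : List ℕ) :
    Ncount n m C = C.countP (fun x => decide (x ≤ m ∨ 2*n+1-m ≤ x)) :=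
  List.countP_eq_length_filter.symm

lemma cnt_le_of_sorted (C : List ℕ) (hs : C.Pairwise (· < ·)) (i : ℕ) (hi : i < C.length) :
    C.countP (fun x => decide (x ≤ C[i])) = i + 1 := by
  obtain ⟨v, hv⟩ : ∃ v, C[i] = v := ⟨_, rfl⟩
  rw [hv]
  conv_lhs => rw [← List.take_append_drop (i+1) C]
  rw [List.countP_append]
  have hlen : (C.take (i+1)).length = i + 1 := by
    rw [List.length_take]; omega
  have h1 : (C.take (i+1)).countP (fun x => decide (x ≤ v)) = i + 1 := by
    rw [List.countP_eq_length.2, hlen]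
    intro a ha
    obtain ⟨j, hj, rfl⟩ := List.mem_iff_getElem.1 ha
    rw [List.getElem_take]
    have hj' : j < C.length := lt_of_lt_of_le (by omega : j < i + 1) (by omega)
    have : C.get ⟨j, hj'⟩ ≤ C.get ⟨i, hi⟩ := by
      apply hs.sortedLT.strictMono_get.monotone
      simp only [Fin.mk_le_mk]
      have := hj; rw [hlen] at this; omega
    simp only [List.get_eq_getElem] at this
    simp only [decide_eq_true_eq]
    omega
  have h2 : (C.drop (i+1)).countP (fun x => decide (x ≤ v)) = 0 := by
    rw [List.countP_eq_zero]
    intro a ha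
    obtain ⟨j, hj, rfl⟩ := List.mem_iff_getElem.1 ha
    rw [List.getElem_drop]
    have hj' : i + 1 + j < C.length := by
      have := hj; rw [List.length_drop] at this; omega
    have : C.get ⟨i, hi⟩ < C.get ⟨i+1+j, hj'⟩ := by
      apply hs.sortedLT.strictMono_get; simp only [Fin.mk_lt_mk]; omega
    simp only [List.get_eq_getElem] at this
    simp only [decide_eq_true_eq]
    omega
  omega

lemma cnt_ge_of_sorted (C : List ℕ) (hs : C.Pairwise (· < ·)) (i : ℕ) (hi : i < C.length) :
    C.countP (fun x => decide (C[i] ≤ x)) = C.length - i := by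
  obtain ⟨v, hv⟩ : ∃ v, C[i] = v := ⟨_, rfl⟩
  rw [hv]
  conv_lhs => rw [← List.take_append_drop i C]
  rw [List.countP_append]
  have h1 : (C.take i).countP (fun x => decide (v ≤ x)) = 0 := by
    rw [List.countP_eq_zero]
    intro a ha
    obtain ⟨j, hj, rfl⟩ := List.mem_iff_getElem.1 ha
    rw [List.getElem_take]
    have hjl : j < i := by have := hj; rw [List.length_take] at this; omega
    have hj' : j < C.length := by omega
    have : C.get ⟨j, hj'⟩ < C.get ⟨i, hi⟩ := by
      apply hs.sortedLT.strictMono_get; simp only [Fin.mk_lt_mk]; omega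
    simp only [List.get_eq_getElem] at this
    simp only [decide_eq_true_eq]
    omega
  have h2 : (C.drop i).countP (fun x => decide (v ≤ x)) = C.length - i := by
    have hlen : (C.drop i).length = C.length - i := List.length_drop
    rw [List.countP_eq_length.2, hlen]
    intro a ha
    obtain ⟨j, hj, rfl⟩ := List.mem_iff_getElem.1 ha
    rw [List.getElem_drop]
    have hj' : i + j < C.length := by rw [hlen] at hj; omega
    have : C.get ⟨i, hi⟩ ≤ C.get ⟨i+j, hj'⟩ := by
      apply hs.sortedLT.strictMono_get.monotone; simp only [Fin.mk_le_mk]; omega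
    simp only [List.get_eq_getElem] at this
    simp only [decide_eq_true_eq]
    omega
  omega

lemma ncount_split (n m : ℕ) (hm : m ≤ n) (C : List ℕ) :
    Ncount n m C = C.countP (fun x => decide (x ≤ m)) +
      C.countP (fun x => decide (2*n+1-m ≤ x)) := by
  rw [ncount_eq_countP]
  induction C with
  | nil => simp
  | cons a t ih =>
    simp only [List.countP_cons, ih]
    by_cases h1 : a ≤ m <;> by_cases h2 : 2*n+1-m ≤ a <;> simp [h1, h2] <;> omega

lemma ncount_step (n m : ℕ) (hm1 : 1 ≤ m) (hmn : m ≤ n) (C : List ℕ)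
    (hb : ∀ x ∈ C, 1 ≤ x ∧ x ≤ 2*n) :
    Ncount n m C = Ncount n (m-1) C + C.count m + C.count (2*n+1-m) := by
  induction C with
  | nil => simp [Ncount]
  | cons a t ih =>
    have ha := hb a (by simp)
    have ih' := ih (fun x hx => hb x (by simp [hx]))
    rw [ncount_eq_countP] at ih' ⊢
    rw [ncount_eq_countP (m := m - 1)] at ih' ⊢
    simp only [List.countP_cons, List.count_cons, beq_iff_eq, decide_eq_true_eq]
    rw [ih']
    split_ifs <;> omega

/-- A column is KN-admissible in the pair-position sense iff
`N(m) ≤ m` for all `m ∈ {1,...,n}`. -/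
theorem stmt0 (n : ℕ) (hn : 1 ≤ n) (C : List ℕ) (hC : IsColumn n C) :
    (∀ p q z, p < q → q < C.length → 1 ≤ z → z ≤ n →
        C.getD p 0 = z → C.getD q 0 = 2*n+1-z →
        C.length - z + 1 ≤ q - p)
    ↔ KNAdmissible n C := by
  obtain ⟨hch, hb⟩ := hC
  have hs : C.Pairwise (· < ·) := List.isChain_iff_pairwise.mp hch
  have hnd : C.Nodup := hs.nodup
  constructor
  · intro hA
    have key : ∀ m, m ≤ n → Ncount n m C ≤ m := by
      intro m
      induction m with
      | zero =>
        intro _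
        rw [ncount_eq_countP]
        rw [List.countP_eq_zero.2]
        intro a ha
        have := hb a ha
        simp only [decide_eq_true_eq]
        omega
      | succ m ih =>
        intro hmn
        by_contra hlt
        push_neg at hlt
        have hprev : Ncount n m C ≤ m := ih (by omega)
        have hstep := ncount_step n (m+1) (by omega) hmn C hb
        simp only [Nat.add_sub_cancel] at hstep
        have hc1 : C.count (m+1) ≤ 1 := by
          by_cases h : (m+1) ∈ C
          · exact le_of_eq (List.count_eq_one_of_mem hnd h)
          · rw [List.count_eq_zero_of_not_mem h]; omega
        have hc2 : C.count (2*n+1-(m+1)) ≤ 1 := by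
          by_cases h : (2*n+1-(m+1)) ∈ C
          · exact le_of_eq (List.count_eq_one_of_mem hnd h)
          · rw [List.count_eq_zero_of_not_mem h]; omega
        have hm1 : (m+1) ∈ C := by
          rw [← List.count_pos_iff]; omega
        have hm2 : (2*n+1-(m+1)) ∈ C := by
          rw [← List.count_pos_iff]; omega
        obtain ⟨p, hp, hCp⟩ := List.mem_iff_getElem.1 hm1
        obtain ⟨q, hq, hCq⟩ := List.mem_iff_getElem.1 hm2
        have hpq : p < q := by
          by_contra hle
          push_neg at hle
          have : C.get ⟨q, hq⟩ ≤ C.get ⟨p, hp⟩ :=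
            hs.sortedLT.strictMono_get.monotone (by simpa [Fin.mk_le_mk] using hle)
          simp only [List.get_eq_getElem, hCp, hCq] at this
          omega
        have hpair := hA p q (m+1) hpq hq (by omega) hmn
          (by rw [List.getD_eq_getElem C 0 hp, hCp])
          (by rw [List.getD_eq_getElem C 0 hq, hCq])
        have hsplit := ncount_split n (m+1) hmn C
        have e1 := cnt_le_of_sorted C hs p hp
        have e2 := cnt_ge_of_sorted C hs q hq
        rw [hCp] at e1
        rw [hCq] at e2
        rw [e1, e2] at hsplit
        omega
    intro m _ hm
    exact key m hm
  · intro hB p q z hpq hq h1 hz hCp hCq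
    have hp : p < C.length := lt_trans hpq hq
    rw [List.getD_eq_getElem C 0 hp] at hCp
    rw [List.getD_eq_getElem C 0 hq] at hCq
    have hNz := hB z h1 hz
    have hsplit := ncount_split n z hz C
    have e1 := cnt_le_of_sorted C hs p hp
    have e2 := cnt_ge_of_sorted C hs q hq
    rw [hCp] at e1
    rw [hCq] at e2
    rw [e1, e2] at hsplit
    omega
end

section
/- If a column C over C_n contains some letter m ≤ n (or m̄) with N(m) > m, then C contains a pair (z, z̄) of letters with N(z) > z. -/
/-- if `C` contains a letter `m` or `m̄` with `N(m) > m`, then `C`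
contains a pair `(z, z̄)` with `N(z) > z`. -/
theorem stmt2 (n : ℕ) (hn : 1 ≤ n) (C : List ℕ) (hC : IsColumn n C)
    (m : ℕ) (hm1 : 1 ≤ m) (hmn : m ≤ n) (hmem : m ∈ C ∨ (2*n+1-m) ∈ C)
    (hN : m < Ncount n m C) :
    ∃ z, 1 ≤ z ∧ z ≤ n ∧ z ∈ C ∧ (2*n+1-z) ∈ C ∧ z < Ncount n z C := by
  classical
  obtain ⟨hchain, hbound⟩ := hC
  have hnodup : C.Nodup :=
    ((List.isChain_iff_pairwise.mp hchain).imp fun h => Nat.ne_of_lt h)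
  set S := C.toFinset with hS
  have hNc : ∀ k, Ncount n k C = (S.filter (fun x => x ≤ k ∨ 2*n+1-k ≤ x)).card := by
    intro k
    rw [Ncount, ← List.toFinset_card_of_nodup (hnodup.filter _), List.toFinset_filter]
    simp [hS]
  have hSmem : ∀ x ∈ S, 1 ≤ x ∧ x ≤ 2*n := by
    intro x hx; exact hbound x (List.mem_toFinset.mp hx)
  -- the set of duplicated letters ≤ m
  set T := (Finset.Icc 1 m).filter (fun z => z ∈ C ∧ (2*n+1-z) ∈ C) with hT
  have hTne : T.Nonempty := by
    by_contra hne
    rw [Finset.not_nonempty_iff_eq_empty] at hne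
    -- injection g into Icc 1 m
    have hinj : ∀ x ∈ S.filter (fun x => x ≤ m ∨ 2*n+1-m ≤ x),
        (if x ≤ m then x else 2*n+1-x) ∈ Finset.Icc 1 m := by
      intro x hx
      obtain ⟨hxS, hxP⟩ := Finset.mem_filter.mp hx
      obtain ⟨h1, h2⟩ := hSmem x hxS
      by_cases h : x ≤ m <;> simp only [h, if_true, if_false] <;>
        simp only [Finset.mem_Icc] <;> omega
    have hcard : (S.filter (fun x => x ≤ m ∨ 2*n+1-m ≤ x)).card ≤ m := by
      have := Finset.card_le_card_of_injOn (fun x => if x ≤ m then x else 2*n+1-x)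
        hinj ?_
      · simpa [Nat.card_Icc] using this
      · intro x hx y hy hxy
        obtain ⟨hxS, hxP⟩ := Finset.mem_filter.mp hx
        obtain ⟨hyS, hyP⟩ := Finset.mem_filter.mp hy
        obtain ⟨hx1, hx2⟩ := hSmem x hxS
        obtain ⟨hy1, hy2⟩ := hSmem y hyS
        by_cases h1 : x ≤ m <;> by_cases h2 : y ≤ m <;>
          simp only [h1, h2, if_true, if_false] at hxy
        · exact hxy
        · -- x ≤ m, y barred : pair (x, x̄) in C, contradiction
          exfalso
          have hxC : x ∈ C := List.mem_toFinset.mp hxS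
          have hyC : y ∈ C := List.mem_toFinset.mp hyS
          have : x ∈ T := by
            rw [hT, Finset.mem_filter, Finset.mem_Icc]
            refine ⟨⟨hx1, h1⟩, hxC, ?_⟩
            have : 2*n+1-x = y := by omega
            rwa [this]
          rw [hne] at this; exact absurd this (Finset.notMem_empty x)
        · exfalso
          have hxC : x ∈ C := List.mem_toFinset.mp hxS
          have hyC : y ∈ C := List.mem_toFinset.mp hyS
          have : y ∈ T := by
            rw [hT, Finset.mem_filter, Finset.mem_Icc]
            refine ⟨⟨hy1, h2⟩, hyC, ?_⟩
            have : 2*n+1-y = x := by omega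
            rwa [this]
          rw [hne] at this; exact absurd this (Finset.notMem_empty y)
        · omega
    rw [hNc m] at hN; omega
  set z := T.max' hTne with hz
  have hzT : z ∈ T := T.max'_mem hTne
  obtain ⟨hzIcc, hzC, hzbC⟩ := Finset.mem_filter.mp hzT
  obtain ⟨hz1, hzm⟩ := Finset.mem_Icc.mp hzIcc
  have hzmax : ∀ y ∈ T, y ≤ z := fun y hy => T.le_max' y hy
  refine ⟨z, hz1, le_trans hzm hmn, hzC, hzbC, ?_⟩
  -- N(m) = N(z) + card B, card B ≤ m - z
  have hsplit : (S.filter (fun x => x ≤ m ∨ 2*n+1-m ≤ x)).card ≤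
      (S.filter (fun x => x ≤ z ∨ 2*n+1-z ≤ x)).card +
      (S.filter (fun x => (x ≤ m ∨ 2*n+1-m ≤ x) ∧ ¬(x ≤ z ∨ 2*n+1-z ≤ x))).card := by
    refine le_trans (Finset.card_le_card ?_) (Finset.card_union_le _ _)
    intro x hx
    obtain ⟨hxS, hxP⟩ := Finset.mem_filter.mp hx
    rw [Finset.mem_union, Finset.mem_filter, Finset.mem_filter]
    by_cases h : x ≤ z ∨ 2*n+1-z ≤ x
    · exact Or.inl ⟨hxS, h⟩
    · exact Or.inr ⟨hxS, hxP, h⟩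
  have hB : (S.filter (fun x => (x ≤ m ∨ 2*n+1-m ≤ x) ∧ ¬(x ≤ z ∨ 2*n+1-z ≤ x))).card ≤ m - z := by
    have := Finset.card_le_card_of_injOn
      (s := S.filter (fun x => (x ≤ m ∨ 2*n+1-m ≤ x) ∧ ¬(x ≤ z ∨ 2*n+1-z ≤ x)))
      (fun x => if x ≤ m then x else 2*n+1-x)
      (t := Finset.Icc (z+1) m) ?_ ?_
    · simpa [Nat.card_Icc] using this
    · intro x hx
      obtain ⟨hxS, hxP, hxQ⟩ := Finset.mem_filter.mp hx
      obtain ⟨h1, h2⟩ := hSmem x hxS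
      push_neg at hxQ
      by_cases h : x ≤ m <;> simp only [h, if_true, if_false] <;>
        simp only [Finset.mem_coe, Finset.mem_Icc] <;> omega
    · intro x hx y hy hxy
      obtain ⟨hxS, hxP, hxQ⟩ := Finset.mem_filter.mp hx
      obtain ⟨hyS, hyP, hyQ⟩ := Finset.mem_filter.mp hy
      obtain ⟨hx1, hx2⟩ := hSmem x hxS
      obtain ⟨hy1, hy2⟩ := hSmem y hyS
      push_neg at hxQ hyQ
      by_cases h1 : x ≤ m <;> by_cases h2 : y ≤ m <;>
        simp only [h1, h2, if_true, if_false] at hxy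
      · exact hxy
      · exfalso
        have hxC : x ∈ C := List.mem_toFinset.mp hxS
        have hyC : y ∈ C := List.mem_toFinset.mp hyS
        have hxT : x ∈ T := by
          rw [hT, Finset.mem_filter, Finset.mem_Icc]
          refine ⟨⟨hx1, h1⟩, hxC, ?_⟩
          have : 2*n+1-x = y := by omega
          rwa [this]
        have := hzmax x hxT
        omega
      · exfalso
        have hxC : x ∈ C := List.mem_toFinset.mp hxS
        have hyC : y ∈ C := List.mem_toFinset.mp hyS
        have hyT : y ∈ T := by
          rw [hT, Finset.mem_filter, Finset.mem_Icc]
          refine ⟨⟨hy1, h2⟩, hyC, ?_⟩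
          have : 2*n+1-y = x := by omega
          rwa [this]
        have := hzmax y hyT
        omega
      · omega
  rw [hNc m] at hN
  rw [hNc z]
  omega
end

section
/- A column C over C_n is KN-admissible if and only if it can be split, i.e., writing I = {z_1 > z_2 > ... > z_r} for the set of unbarred letters z such that both z and z̄ occur in C, there exists a set J = {t_1 > ... > t_r} of unbarred letters with: t_1 is the greatest letter of C_n with t_1 < z_1, t_1 ∉ C and t̄_1 ∉ C; and for i = 2,...,r, t_i is the greatest letter with t_i < min(t_{i-1}, z_i), t_i ∉ C and t̄_i ∉ C. -/
/-! ### Auxiliary development for Statement 3. -/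

section SheatsAux

variable (n : ℕ) (C : List ℕ)

/-- `b` is a free letter: `1 ≤ b`, `b ∉ C`, `b̄ ∉ C`. -/
def freeQ (b : ℕ) : Prop := 1 ≤ b ∧ b ∉ C ∧ (2*n+1-b) ∉ C

instance : DecidablePred (freeQ n C) := fun _ => by unfold freeQ; infer_instance

/-- `b` is a duplicated letter. -/
def dupQ (b : ℕ) : Prop := b ∈ C ∧ (2*n+1-b) ∈ C

instance : DecidablePred (dupQ n C) := fun _ => by unfold dupQ; infer_instance

/-- Number of free letters in `[1,m]`. -/
def FeS (m : ℕ) : ℕ := ((Finset.range (m+1)).filter (freeQ n C)).card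

/-- Number of duplicated letters in `[1,m]`. -/
def DeS (m : ℕ) : ℕ := ((Finset.range (m+1)).filter (dupQ n C)).card

/-- Greedy construction of the splitting set. -/
def buildJ : List ℕ → ℕ → List ℕ
  | [], _ => []
  | z :: zs, prev =>
      let t := Nat.findGreatest (freeQ n C) (min prev z - 1)
      t :: buildJ zs t

end SheatsAux

lemma col_nodup {n : ℕ} {C : List ℕ} (hC : IsColumn n C) : C.Nodup := by
  have := List.isChain_iff_pairwise.mp hC.1
  exact this.imp Nat.ne_of_lt

lemma FeS_succ (n : ℕ) (C : List ℕ) (m : ℕ) :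
    FeS n C (m+1) = FeS n C m + (if freeQ n C (m+1) then 1 else 0) := by
  unfold FeS
  rw [Finset.range_add_one, Finset.filter_insert]
  split
  · rw [Finset.card_insert_of_notMem (by simp)]
  · simp

lemma FeS_eq_of_no_free (n : ℕ) (C : List ℕ) {a b : ℕ} (hab : a ≤ b)
    (h : ∀ s, a < s → s ≤ b → ¬ freeQ n C s) : FeS n C b = FeS n C a := by
  induction b with
  | zero => have : a = 0 := by omega
            subst this; rfl
  | succ b ih =>
      rcases Nat.lt_or_ge a (b+1) with hlt | hge
      · have ha : a ≤ b := by omega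
        rw [FeS_succ, if_neg (h (b+1) hlt le_rfl)]
        simpa using ih ha (fun s hs hsb => h s hs (by omega))
      · have : a = b + 1 := by omega
        subst this; rfl

lemma length_le_DeS (n : ℕ) (C : List ℕ) (z : ℕ) (rest : List ℕ)
    (hp : (z :: rest).Pairwise (· > ·))
    (hd : ∀ y ∈ z :: rest, dupQ n C y) :
    (z :: rest).length ≤ DeS n C z := by
  classical
  have hnd : (z :: rest).Nodup := hp.imp (fun h => Nat.ne_of_gt h)
  have hsub : (z :: rest).toFinset ⊆ (Finset.range (z+1)).filter (dupQ n C) := by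
    intro y hy
    rw [List.mem_toFinset] at hy
    have hle : y ≤ z := by
      rcases hy with _ | h
      · exact le_rfl
      · exact le_of_lt (List.rel_of_pairwise_cons hp (by assumption))
    exact Finset.mem_filter.mpr ⟨Finset.mem_range.mpr (by omega), hd y hy⟩
  calc (z :: rest).length = (z :: rest).toFinset.card :=
        (List.toFinset_card_of_nodup hnd).symm
    _ ≤ _ := Finset.card_le_card hsub

/-- The fundamental counting identity: `N(m) + #Free(m) = m + #Dup(m)`. -/
lemma ncount_identity {n : ℕ} {C : List ℕ} (hC : IsColumn n C) {m : ℕ} (hm : m ≤ n) :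
    Ncount n m C + FeS n C m = m + DeS n C m := by
  classical
  have hnd : C.Nodup := col_nodup hC
  set S1 : Finset ℕ := (Finset.range (m+1)).filter (· ∈ C) with hS1
  set S2 : Finset ℕ := (Finset.range (m+1)).filter (fun b => (2*n+1-b) ∈ C) with hS2
  -- Step 1: Ncount = S1.card + S2.card
  have hNc : Ncount n m C = S1.card + S2.card := by
    have hstep : Ncount n m C
        = (C.toFinset.filter (fun x => x ≤ m ∨ 2*n+1-m ≤ x)).card := by
      unfold Ncount
      rw [← List.toFinset_card_of_nodup (hnd.filter _), List.toFinset_filter]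
      congr 1
      apply Finset.filter_congr
      intro x _
      simp
    rw [hstep, Finset.filter_or,
      Finset.card_union_of_disjoint (by
        rw [Finset.disjoint_left]
        intro x hx hx2
        simp only [Finset.mem_filter, List.mem_toFinset] at hx hx2
        have := (hC.2 x hx.1).1
        omega)]
    congr 1
    · have : C.toFinset.filter (fun x => x ≤ m) = S1 := by
        ext x
        simp only [Finset.mem_filter, List.mem_toFinset, hS1, Finset.mem_range]
        constructor
        · rintro ⟨hx, hxm⟩; exact ⟨by omega, hx⟩
        · rintro ⟨hxm, hx⟩; exact ⟨hx, by omega⟩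
      rw [this]
    · have himg : C.toFinset.filter (fun x => 2*n+1-m ≤ x)
          = S2.image (fun b => 2*n+1-b) := by
        ext x
        simp only [Finset.mem_filter, List.mem_toFinset, hS2, Finset.mem_range,
          Finset.mem_image]
        constructor
        · rintro ⟨hx, hxm⟩
          have hx2 : x ≤ 2*n := (hC.2 x hx).2
          refine ⟨2*n+1-x, ⟨by omega, ?_⟩, by omega⟩
          have : 2*n+1-(2*n+1-x) = x := by omega
          rw [this]; exact hx
        · rintro ⟨b, ⟨hb, hbC⟩, rfl⟩
          exact ⟨hbC, by omega⟩
      have hinj : Set.InjOn (fun b => 2*n+1-b) (S2 : Set ℕ) := by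
        intro a ha b hb hab
        simp only [hS2, Finset.coe_filter, Set.mem_setOf_eq, Finset.mem_range] at ha hb
        simp only at hab
        omega
      rw [himg, Finset.card_image_of_injOn hinj]
  -- Step 2: S1∩S2 is the dup set, union with free set partitions [1,m]
  have hinter : S1 ∩ S2 = (Finset.range (m+1)).filter (dupQ n C) := by
    ext b
    simp only [Finset.mem_inter, hS1, hS2, Finset.mem_filter, Finset.mem_range, dupQ]
    tauto
  have hpart : (S1 ∪ S2).card + FeS n C m = m := by
    have hzero : (0:ℕ) ∉ C := fun h => by have := (hC.2 0 h).1; omega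
    have hbar : ∀ b, 2*n < b → b ∉ C := fun b hb h => by
      have := (hC.2 b h).2; omega
    have hun : (S1 ∪ S2) ∪ (Finset.range (m+1)).filter (freeQ n C)
        = (Finset.range (m+1)).erase 0 := by
      ext b
      simp only [Finset.mem_union, hS1, hS2, Finset.mem_filter, Finset.mem_range,
        Finset.mem_erase, freeQ]
      constructor
      · rintro ((⟨h1, h2⟩ | ⟨h1, h2⟩) | ⟨h1, h2⟩)
        · exact ⟨fun h => hzero (h ▸ h2), h1⟩
        · refine ⟨fun h => ?_, h1⟩
          subst h
          exact hbar _ (by omega) h2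
        · omega
      · rintro ⟨h0, hb⟩
        by_cases h1 : b ∈ C
        · exact Or.inl (Or.inl ⟨hb, h1⟩)
        · by_cases h2 : (2*n+1-b) ∈ C
          · exact Or.inl (Or.inr ⟨hb, h2⟩)
          · exact Or.inr ⟨hb, by omega, h1, h2⟩
    have hdisj : Disjoint (S1 ∪ S2) ((Finset.range (m+1)).filter (freeQ n C)) := by
      rw [Finset.disjoint_left]
      intro b hb hb2
      simp only [Finset.mem_union, hS1, hS2, Finset.mem_filter] at hb hb2
      unfold freeQ at hb2
      tauto
    have := Finset.card_union_of_disjoint hdisj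
    rw [hun] at this
    rw [Finset.card_erase_of_mem (by simp), Finset.card_range] at this
    unfold FeS
    omega
  have hsum := Finset.card_union_add_card_inter S1 S2
  rw [hinter] at hsum
  unfold DeS
  omega

lemma head_free_bound {n : ℕ} {C : List ℕ}
    (hadm' : ∀ m, 1 ≤ m → m ≤ n → DeS n C m ≤ FeS n C m)
    (z : ℕ) (rest : List ℕ) (hp : (z::rest).Pairwise (· > ·))
    (hd : ∀ y ∈ z::rest, 1 ≤ y ∧ y ≤ n ∧ dupQ n C y)
    (prev : ℕ) (hprev : z ≤ prev) :
    (z::rest).length ≤ FeS n C (min prev z - 1) := by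
  have h1 := length_le_DeS n C z rest hp (fun y hy => (hd y hy).2.2)
  have hz := hd z (List.mem_cons_self)
  have h2 := hadm' z hz.1 hz.2.1
  have h3 : FeS n C z = FeS n C (z-1) := by
    have e : z - 1 + 1 = z := by omega
    have hs := FeS_succ n C (z-1)
    rw [e] at hs
    rw [hs, if_neg (fun hf => hf.2.1 hz.2.2.1)]
    omega
  have e2 : min prev z = z := min_eq_right hprev
  rw [e2]
  omega

lemma buildJ_spec {n : ℕ} {C : List ℕ}
    (hadm' : ∀ m, 1 ≤ m → m ≤ n → DeS n C m ≤ FeS n C m)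
    (zs : List ℕ) : ∀ (prev : ℕ), zs.Pairwise (· > ·) →
      (∀ y ∈ zs, 1 ≤ y ∧ y ≤ n ∧ dupQ n C y) →
      (∀ z ∈ zs.head?, zs.length ≤ FeS n C (min prev z - 1)) →
      (buildJ n C zs prev).length = zs.length ∧
      ∀ i < zs.length,
        freeQ n C ((buildJ n C zs prev).getD i 0) ∧
        (buildJ n C zs prev).getD i 0 <
          min (if i = 0 then prev else (buildJ n C zs prev).getD (i-1) 0) (zs.getD i 0) ∧
        ∀ s, freeQ n C s →
          s < min (if i = 0 then prev else (buildJ n C zs prev).getD (i-1) 0) (zs.getD i 0) →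
          s ≤ (buildJ n C zs prev).getD i 0 := by
  induction zs with
  | nil =>
      intro prev _ _ _
      exact ⟨rfl, fun i hi => absurd hi (by simp)⟩
  | cons z rest ih =>
      intro prev hp hd hF
      set B := min prev z - 1 with hB
      set t := Nat.findGreatest (freeQ n C) B with ht
      have hFB : rest.length + 1 ≤ FeS n C B := by
        simpa using hF z (by simp)
      have hex : ∃ k, k ≤ B ∧ freeQ n C k := by
        have hpos : 0 < ((Finset.range (B+1)).filter (freeQ n C)).card := by
          have h0 := hFB; unfold FeS at h0; omega
        obtain ⟨k, hk⟩ := Finset.card_pos.mp hpos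
        rw [Finset.mem_filter, Finset.mem_range] at hk
        exact ⟨k, by omega, hk.2⟩
      obtain ⟨k, hkB, hkfree⟩ := hex
      have htfree : freeQ n C t := Nat.findGreatest_spec hkB hkfree
      have htB : t ≤ B := Nat.findGreatest_le B
      have hk1 : 1 ≤ k := hkfree.1
      have htlt : t < min prev z := by omega
      have hmax : ∀ s, freeQ n C s → s < min prev z → s ≤ t := by
        intro s hs hslt
        by_contra hgt
        push_neg at hgt
        exact Nat.findGreatest_is_greatest hgt (by omega) hs
      have hbuild : buildJ n C (z :: rest) prev = t :: buildJ n C rest t := rfl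
      -- invariant for the tail
      have hF' : ∀ z' ∈ rest.head?, rest.length ≤ FeS n C (min t z' - 1) := by
        intro z' hz'
        rcases rest with _ | ⟨z2, r2⟩
        · simp at hz'
        · have hz2 : z' = z2 := by simpa using hz'.symm
          subst hz2
          rcases Nat.lt_or_ge z' t with hlt | hge
          · exact head_free_bound hadm' z' r2 (List.Pairwise.of_cons hp)
              (fun y hy => hd y (List.mem_cons_of_mem z hy)) t (le_of_lt hlt)
          · have hnofree : ∀ s, t < s → s ≤ B → ¬ freeQ n C s :=
              fun s h1 h2 => Nat.findGreatest_is_greatest h1 h2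
            have hEq : FeS n C B = FeS n C t := FeS_eq_of_no_free n C htB hnofree
            have ht1 : FeS n C t = FeS n C (t-1) + 1 := by
              have h1t : 1 ≤ t := htfree.1
              have e : t - 1 + 1 = t := by omega
              have hs := FeS_succ n C (t-1)
              rw [e] at hs
              rw [hs, if_pos htfree]
            have e2 : min t z' = t := min_eq_left hge
            rw [e2]
            omega
      obtain ⟨ihlen, ihprop⟩ := ih t (List.Pairwise.of_cons hp)
        (fun y hy => hd y (List.mem_cons_of_mem z hy)) hF'
      constructor
      · rw [hbuild]; simpa using ihlen
      · intro i hi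
        rw [hbuild]
        cases i with
        | zero =>
            simp only [List.getD_cons_zero, if_pos rfl]
            exact ⟨htfree, htlt, hmax⟩
        | succ j =>
            have hj : j < rest.length := by simpa using hi
            have hIH := ihprop j hj
            simp only [List.getD_cons_succ, Nat.succ_ne_zero, if_false,
              Nat.succ_sub_one]
            cases j with
            | zero =>
                simpa using hIH
            | succ j' =>
                simpa using hIH

lemma dupList_pairwise (n : ℕ) (C : List ℕ) : (dupList n C).Pairwise (· > ·) := by
  unfold dupList
  rw [List.pairwise_reverse]
  exact List.Pairwise.sublist List.filter_sublist List.pairwise_lt_range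

lemma mem_dupList {n : ℕ} {C : List ℕ} {z : ℕ} :
    z ∈ dupList n C ↔ 1 ≤ z ∧ z ≤ n ∧ z ∈ C ∧ (2*n+1-z) ∈ C := by
  unfold dupList
  simp only [List.mem_reverse, List.mem_filter, List.mem_range, decide_eq_true_eq]
  constructor
  · rintro ⟨h1, h2, h3, h4⟩; exact ⟨h2, by omega, h3, h4⟩
  · rintro ⟨h1, h2, h3, h4⟩; exact ⟨by omega, h1, h3, h4⟩

lemma dupList_props {n : ℕ} {C : List ℕ} :
    ∀ y ∈ dupList n C, 1 ≤ y ∧ y ≤ n ∧ dupQ n C y := by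
  intro y hy
  rw [mem_dupList] at hy
  exact ⟨hy.1, hy.2.1, hy.2.2.1, hy.2.2.2⟩


/-- Sheats: a column is KN-admissible iff it can be split. -/
theorem stmt3 (n : ℕ) (hn : 1 ≤ n) (C : List ℕ) (hC : IsColumn n C) :
    KNAdmissible n C ↔ CanSplit n C := by
  constructor
  · -- admissible → can split
    intro hadm
    have hadm' : ∀ m, 1 ≤ m → m ≤ n → DeS n C m ≤ FeS n C m := by
      intro m h1 h2
      have hi := ncount_identity hC h2
      have := hadm m h1 h2
      omega
    have hp := dupList_pairwise n C
    have hd := @dupList_props n C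
    have hF0 : ∀ z ∈ (dupList n C).head?, (dupList n C).length ≤ FeS n C (min (2*n+1) z - 1) := by
      intro z hz
      rcases hzs : dupList n C with _ | ⟨z0, rest⟩
      · rw [hzs] at hz; simp at hz
      · rw [hzs] at hz hp hd
        have hz0 : z0 = z := by simpa using hz
        subst hz0
        exact head_free_bound hadm' z0 rest hp hd (2*n+1)
          (by have := (hd z0 (List.mem_cons_self)).2.1; omega)
    obtain ⟨hlen, hprop⟩ := buildJ_spec hadm' (dupList n C) (2*n+1) hp hd hF0
    refine ⟨buildJ n C (dupList n C) (2*n+1), hlen, ?_⟩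
    intro i hi
    rw [hlen] at hi
    obtain ⟨hfree, hlt, hmaxi⟩ := hprop i hi
    have hbound : (if i = 0 then (dupList n C).getD 0 0
          else min ((buildJ n C (dupList n C) (2*n+1)).getD (i-1) 0) ((dupList n C).getD i 0))
        = min (if i = 0 then 2*n+1 else (buildJ n C (dupList n C) (2*n+1)).getD (i-1) 0)
            ((dupList n C).getD i 0) := by
      cases i with
      | zero =>
          have hmem : (dupList n C).getD 0 0 ∈ dupList n C := by
            rw [List.getD_eq_getElem _ _ hi]
            exact List.getElem_mem _
          have hle := (dupList_props _ hmem).2.1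
          show (dupList n C).getD 0 0
              = min (2*n+1) ((dupList n C).getD 0 0)
          omega
      | succ j => simp
    rw [hbound]
    constructor
    · exact ⟨hfree.1, hlt, hfree.2.1, hfree.2.2⟩
    · intro s hs
      exact hmaxi s ⟨hs.1, hs.2.2.1, hs.2.2.2⟩ hs.2.1
  · -- can split → admissible
    rintro ⟨J, hJlen, hJ⟩ m hm1 hmn
    have hi := ncount_identity hC hmn
    suffices h : DeS n C m ≤ FeS n C m by omega
    -- each element of J is free and below the corresponding dup
    have hJfree : ∀ i < J.length, freeQ n C (J.getD i 0) ∧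
        J.getD i 0 < (dupList n C).getD i 0 := by
      intro i hiJ
      obtain ⟨hf, _⟩ := hJ i hiJ
      refine ⟨⟨hf.1, hf.2.2.1, hf.2.2.2⟩, ?_⟩
      have := hf.2.1
      cases i with
      | zero => simpa using this
      | succ j => simp only [Nat.succ_ne_zero, if_false] at this; omega
    have hstep : ∀ i, i + 1 < J.length → J.getD (i+1) 0 < J.getD i 0 := by
      intro i hiJ
      have := (hJ (i+1) hiJ).1.2.1
      simp only [Nat.succ_ne_zero, if_false, Nat.succ_sub_one] at this
      omega
    have hanti : ∀ d i, i + d + 1 < J.length → J.getD (i+d+1) 0 < J.getD i 0 := by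
      intro d
      induction d with
      | zero => intro i h; exact hstep i (by simpa using h)
      | succ d ihd =>
          intro i h
          have e : i + (d+1) + 1 = (i+d+1) + 1 := by omega
          rw [e] at h ⊢
          exact lt_trans (hstep (i+d+1) h) (ihd i (by omega))
    have hltJ : ∀ i j, i < j → j < J.length → J.getD j 0 < J.getD i 0 := by
      intro i j hij hj
      have e : j = i + (j - i - 1) + 1 := by omega
      rw [e] at hj ⊢
      exact hanti (j - i - 1) i hj
    -- injection from Dup(m) to Free(m)
    apply Finset.card_le_card_of_injOn
      (fun z => J.getD ((dupList n C).idxOf z) 0)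
    · intro z hz
      rw [Finset.mem_coe, Finset.mem_filter, Finset.mem_range] at hz
      obtain ⟨hzm, hzC, hzbC⟩ := hz
      have hz1 : 1 ≤ z := (hC.2 z hzC).1
      have hzmem : z ∈ dupList n C := mem_dupList.mpr ⟨hz1, by omega, hzC, hzbC⟩
      have hidx : (dupList n C).idxOf z < (dupList n C).length :=
        List.idxOf_lt_length_iff.mpr hzmem
      have hgd : (dupList n C).getD ((dupList n C).idxOf z) 0 = z := by
        rw [List.getD_eq_getElem _ _ hidx]
        exact List.getElem_idxOf hidx
      have hidx' : (dupList n C).idxOf z < J.length := by omega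
      obtain ⟨hfr, hlt⟩ := hJfree _ hidx'
      rw [hgd] at hlt
      rw [Finset.mem_coe, Finset.mem_filter, Finset.mem_range]
      beta_reduce
      exact ⟨by omega, hfr⟩
    · intro a ha b hb hab
      simp only [Finset.coe_filter, Set.mem_setOf_eq, Finset.mem_range] at ha hb
      obtain ⟨ham, haC, habC⟩ := ha
      obtain ⟨hbm, hbC, hbbC⟩ := hb
      have hamem : a ∈ dupList n C :=
        mem_dupList.mpr ⟨(hC.2 a haC).1, by omega, haC, habC⟩
      have hbmem : b ∈ dupList n C :=
        mem_dupList.mpr ⟨(hC.2 b hbC).1, by omega, hbC, hbbC⟩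
      have hia : (dupList n C).idxOf a < (dupList n C).length :=
        List.idxOf_lt_length_iff.mpr hamem
      have hib : (dupList n C).idxOf b < (dupList n C).length :=
        List.idxOf_lt_length_iff.mpr hbmem
      by_contra hne
      have hine : (dupList n C).idxOf a ≠ (dupList n C).idxOf b := by
        intro he
        apply hne
        have h1 : (dupList n C).getD ((dupList n C).idxOf a) 0 = a := by
          rw [List.getD_eq_getElem _ _ hia]; exact List.getElem_idxOf hia
        have h2 : (dupList n C).getD ((dupList n C).idxOf b) 0 = b := by
          rw [List.getD_eq_getElem _ _ hib]; exact List.getElem_idxOf hib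
        rw [← h1, ← h2, he]
      simp only at hab
      rcases Nat.lt_or_ge ((dupList n C).idxOf a) ((dupList n C).idxOf b) with hlt | hge
      · have := hltJ _ _ hlt (by omega)
        omega
      · have hgt : (dupList n C).idxOf b < (dupList n C).idxOf a := by omega
        have := hltJ _ _ hgt (by omega)
        omega
end

section
/- Let w be a word over C_n that is a non-admissible column word (strictly increasing) all of whose strict factors are admissible column words. Then there is a unique lowest unbarred letter z such that the pair (z, z̄) occurs in w and N(z) = z + 1 (where N(z) counts letters x of w with x ≤ z or x ≥ z̄), and moreover the condition N(z) > z for such a minimal word forces N(z) = z + 1 exactly. -/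
lemma stmt8_countP_split {α} (p q : α → Bool) (h : ∀ x, p x = true → q x = true)
    (l : List α) :
    l.countP q = l.countP p + l.countP (fun x => q x && !p x) := by
  induction l with
  | nil => simp
  | cons a t ih =>
    simp only [List.countP_cons]
    by_cases hp : p a = true
    · have hq := h a hp; simp [hp, hq, ih]; omega
    · simp only [Bool.not_eq_true] at hp
      by_cases hq : q a = true <;> simp [hp, hq, ih] <;> omega

lemma stmt8_countP_or_le {α} [DecidableEq α] (a b : α) (l : List α) :
    l.countP (fun x => x == a || x == b) ≤ l.count a + l.count b := by
  induction l with
  | nil => simp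
  | cons c t ih =>
    simp only [List.countP_cons, List.count_cons]
    by_cases h1 : c = a <;> by_cases h2 : c = b <;> simp [h1, h2] <;> omega

lemma stmt8_key (n : ℕ) (w : List ℕ) (hw : MinimalNonAdm n w) :
    ∀ z, 1 ≤ z → z ≤ n → z < Ncount n z w → Ncount n z w = z + 1 := by
  intro z hz1 hzn hlt
  cases w with
  | nil => simp [Ncount] at hlt
  | cons a t =>
    have htinf : t <:+: a :: t := (List.suffix_cons a t).isInfix
    have htadm : KNAdmissible n t := hw.2.2 t htinf (by simp)
    have hNt : Ncount n z t ≤ z := htadm z hz1 hzn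
    have hle : Ncount n z (a :: t) ≤ Ncount n z t + 1 := by
      simp only [Ncount, List.filter_cons]
      split <;> simp <;> omega
    omega

lemma stmt8_mem (n : ℕ) (w : List ℕ) (hw : MinimalNonAdm n w)
    (z : ℕ) (hz1 : 1 ≤ z) (hzn : z ≤ n)
    (hprev : Ncount n (z-1) w ≤ z - 1) (hNz : Ncount n z w = z + 1) :
    z ∈ w ∧ (2*n+1-z) ∈ w := by
  have hnd : w.Nodup :=
    (List.isChain_iff_pairwise.mp hw.1.1).imp (fun h => ne_of_lt h)
  have hsplit : Ncount n z w = Ncount n (z-1) w +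
      w.countP (fun x => (decide (x ≤ z ∨ 2*n+1-z ≤ x)) &&
        !(decide (x ≤ z-1 ∨ 2*n+1-(z-1) ≤ x))) := by
    simp only [Ncount, ← List.countP_eq_length_filter]
    apply stmt8_countP_split
    intro x hx
    simp only [decide_eq_true_eq] at hx ⊢
    omega
  have hmono : w.countP (fun x => (decide (x ≤ z ∨ 2*n+1-z ≤ x)) &&
        !(decide (x ≤ z-1 ∨ 2*n+1-(z-1) ≤ x))) ≤
      w.countP (fun x => x == z || x == 2*n+1-z) := by
    apply List.countP_mono_left
    intro x _ hx
    simp only [Bool.and_eq_true, Bool.not_eq_true', decide_eq_true_eq,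
      decide_eq_false_iff_not] at hx
    simp only [Bool.or_eq_true, beq_iff_eq]
    omega
  have hor := stmt8_countP_or_le z (2*n+1-z) w
  have hcz : w.count z ≤ 1 := List.nodup_iff_count_le_one.mp hnd z
  have hcz' : w.count (2*n+1-z) ≤ 1 := List.nodup_iff_count_le_one.mp hnd _
  have h1 : 1 ≤ w.count z := by omega
  have h2 : 1 ≤ w.count (2*n+1-z) := by omega
  exact ⟨List.count_pos_iff.mp h1, List.count_pos_iff.mp h2⟩

/-- a minimal non-admissible column word has a unique lowest
unbarred letter `z` with `(z, z̄)` in `w` and `N(z) = z + 1`; moreover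
`N(z) > z` forces `N(z) = z + 1` for such pairs. -/
theorem stmt8 (n : ℕ) (hn : 1 ≤ n) (w : List ℕ) (hw : MinimalNonAdm n w) :
    (∃ z, (1 ≤ z ∧ z ≤ n ∧ z ∈ w ∧ (2*n+1-z) ∈ w ∧ Ncount n z w = z+1) ∧
       ∀ z', (1 ≤ z' ∧ z' ≤ n ∧ z' ∈ w ∧ (2*n+1-z') ∈ w ∧ Ncount n z' w = z'+1) →
         z ≤ z') ∧
    (∀ z, 1 ≤ z → z ≤ n → z ∈ w → (2*n+1-z) ∈ w → z < Ncount n z w →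
      Ncount n z w = z+1) := by
  constructor
  · -- existence of minimal z
    have hex : ∃ m, 1 ≤ m ∧ m ≤ n ∧ m < Ncount n m w := by
      have h := hw.2.1
      simp only [KNAdmissible, not_forall] at h
      obtain ⟨m, h1, h2, h3⟩ := h
      exact ⟨m, h1, h2, by omega⟩
    classical
    let P : ℕ → Prop := fun m => 1 ≤ m ∧ m ≤ n ∧ m < Ncount n m w
    have hexP : ∃ m, P m := hex
    set z := Nat.find hexP with hzdef
    obtain ⟨hz1, hzn, hzlt⟩ := Nat.find_spec hexP
    have hNz : Ncount n z w = z + 1 := stmt8_key n w hw z hz1 hzn hzlt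
    have hprev : Ncount n (z-1) w ≤ z - 1 := by
      rcases Nat.eq_or_lt_of_le hz1 with h1 | h1
    -- z = 1 : Ncount n 0 w = 0
      · have : Ncount n 0 w = 0 := by
          simp only [Ncount, List.length_eq_zero_iff]
          rw [List.filter_eq_nil_iff]
          intro x hx
          have := hw.1.2 x hx
          simp only [decide_eq_true_eq, not_or]
          omega
        have hz0 : z - 1 = 0 := by omega
        rw [hz0]
        omega
      · have hmin := Nat.find_min hexP (m := z - 1) (by omega)
        simp only [P, not_and, not_lt] at hmin
        have := hmin (by omega) (by omega)
        omega
    obtain ⟨hmem, hmem'⟩ := stmt8_mem n w hw z hz1 hzn hprev hNz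
    refine ⟨z, ⟨hz1, hzn, hmem, hmem', hNz⟩, ?_⟩
    intro z' ⟨h1, h2, _, _, h5⟩
    exact Nat.find_le ⟨h1, h2, by omega⟩
  · intro z hz1 hzn _ _ hlt
    exact stmt8_key n w hw z hz1 hzn hlt
end

section
/- Let w = x_1 x_2 ... x_{p+1} be a strictly increasing word over C_n that is not an admissible column word but every strict factor of which is an admissible column word. Let z be the lowest unbarred letter with (z, z̄) in w and N(z) = z + 1, and let w̃ be obtained by deleting z and z̄ from w. Then w̃ is an admissible column word of length p - 1. -/
private lemma countP_or_two (l : List ℕ) (a b : ℕ) (hab : a ≠ b) :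
    l.countP (fun x => decide (x = a ∨ x = b)) = l.count a + l.count b := by
  induction l with
  | nil => simp
  | cons y t ih =>
    simp only [List.countP_cons, List.count_cons, ih, decide_eq_true_iff, beq_iff_eq]
    by_cases h1 : y = a <;> by_cases h2 : y = b <;> simp_all <;> omega

private lemma countP_split (l : List ℕ) (p q : ℕ → Bool) :
    l.countP p = l.countP (fun x => p x && q x) + l.countP (fun x => p x && !q x) := by
  induction l with
  | nil => simp
  | cons y t ih =>
    simp only [List.countP_cons, ih]
    cases hp : p y <;> cases hq : q y <;> simp [hp, hq] <;> omega

private lemma countP_le_three (l : List ℕ) (p q : ℕ → Bool) (a b : ℕ)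
    (h : ∀ x ∈ l, p x = true → q x = true ∨ x = a ∨ x = b) :
    l.countP p ≤ l.countP q + l.count a + l.count b := by
  induction l with
  | nil => simp
  | cons y t ih =>
    have hy := h y (by simp)
    have ih' := ih (fun x hx => h x (List.mem_cons_of_mem _ hx))
    simp only [List.countP_cons, List.count_cons, beq_iff_eq]
    by_cases hp : p y = true
    · rcases hy hp with hq | h1 | h1 <;>
        split_ifs <;> first | omega | simp_all
    · split_ifs <;> first | omega | simp_all

/-- erasing the pair `(z, z̄)` from a minimal non-admissible
column word of length `p+1` yields an admissible column word of length `p-1`. -/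
theorem stmt9 (n p : ℕ) (hn : 1 ≤ n) (w : List ℕ) (hw : MinimalNonAdm n w)
    (hl : w.length = p + 1) :
    IsColumn n (contract n w) ∧ KNAdmissible n (contract n w) ∧
    (contract n w).length = p - 1 := by
  obtain ⟨⟨hch, hmem⟩, hnadm, hfac⟩ := hw
  have hpw : w.Pairwise (· < ·) := List.isChain_iff_pairwise.mp hch
  have hnodup : w.Nodup := hpw.imp ne_of_lt
  have hN : ∀ (m : ℕ) (l : List ℕ),
      Ncount n m l = l.countP (fun x => decide (x ≤ m ∨ 2*n+1-m ≤ x)) :=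
    fun m l => (List.countP_eq_length_filter).symm
  have hcount_le : ∀ a : ℕ, w.count a ≤ 1 := by
    intro a
    by_cases h : a ∈ w
    · rw [List.count_eq_one_of_mem hnodup h]
    · rw [List.count_eq_zero_of_not_mem h]; omega
  have hne : w ≠ [] := by
    rintro rfl
    exact hnadm fun m h1 h2 => by simp [Ncount]
  -- global bound: N(m) ≤ m + 1 for all m in range
  have hbound : ∀ m, 1 ≤ m → m ≤ n → Ncount n m w ≤ m + 1 := by
    intro m h1 h2
    have hlen : w.dropLast.length < w.length := by
      rw [List.length_dropLast]
      have : 0 < w.length := List.length_pos_iff.mpr hne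
      omega
    have hadm := hfac w.dropLast (List.dropLast_prefix w).isInfix hlen m h1 h2
    have hw' : w.dropLast ++ [w.getLast hne] = w := List.dropLast_concat_getLast hne
    calc Ncount n m w = Ncount n m (w.dropLast ++ [w.getLast hne]) := by rw [hw']
      _ ≤ Ncount n m w.dropLast + 1 := by
          rw [hN, hN, List.countP_append]
          have : List.countP (fun x => decide (x ≤ m ∨ 2*n+1-m ≤ x)) [w.getLast hne] ≤ 1 := by
            simp only [List.countP_cons, List.countP_nil]
            split_ifs <;> omega
          omega
      _ ≤ m + 1 := by omega
  -- the least m with N(m) > m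
  have hex : ∃ m, m ≤ n ∧ m < Ncount n m w := by
    by_contra hc
    push_neg at hc
    exact hnadm fun m h1 h2 => hc m h2
  set m₀ := Nat.find hex with hm₀def
  obtain ⟨hm₀n, hm₀N⟩ := Nat.find_spec hex
  rw [← hm₀def] at hm₀n hm₀N
  have hm₀pos : 1 ≤ m₀ := by
    by_contra h
    have hz : m₀ = 0 := by omega
    have : Ncount n 0 w = 0 := by
      rw [hN]
      apply List.countP_eq_zero.mpr
      intro x hx
      have := hmem x hx
      simp only [decide_eq_true_iff]
      omega
    rw [hz] at hm₀N
    omega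
  have hprev : Ncount n (m₀-1) w ≤ m₀ - 1 := by
    have h := Nat.find_min hex (show m₀ - 1 < m₀ by omega)
    by_contra hc
    exact h ⟨by omega, by omega⟩
  have hstep : Ncount n m₀ w ≤ Ncount n (m₀-1) w + w.count m₀ + w.count (2*n+1-m₀) := by
    rw [hN, hN]
    apply countP_le_three
    intro x hx hp
    have hb := hmem x hx
    simp only [decide_eq_true_iff] at hp ⊢
    omega
  have hc1 : w.count m₀ ≤ 1 := hcount_le _
  have hc2 : w.count (2*n+1-m₀) ≤ 1 := hcount_le _
  have hcm₀ : w.count m₀ = 1 := by omega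
  have hcz : w.count (2*n+1-m₀) = 1 := by omega
  have hNeq : Ncount n m₀ w = m₀ + 1 := by omega
  have hmw : m₀ ∈ w := List.count_pos_iff.mp (by omega)
  have hzbw : (2*n+1-m₀) ∈ w := List.count_pos_iff.mp (by omega)
  have hzz : m₀ ≠ 2*n+1-m₀ := by omega
  -- badLetter = m₀
  have hbadeq : badLetter n w = m₀ := by
    unfold badLetter
    set L := (List.range (n+1)).filter (fun z =>
      decide (1 ≤ z ∧ z ∈ w ∧ (2*n+1-z) ∈ w ∧ Ncount n z w = z+1)) with hL
    have hmem₀ : m₀ ∈ L := by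
      rw [hL, List.mem_filter, List.mem_range]
      exact ⟨by omega, by simp only [decide_eq_true_iff]; exact ⟨hm₀pos, hmw, hzbw, hNeq⟩⟩
    have hsort : L.Pairwise (· < ·) :=
      List.Pairwise.sublist (List.filter_sublist) (List.pairwise_lt_range)
    obtain ⟨a, t, hLe⟩ := List.exists_cons_of_ne_nil (List.ne_nil_of_mem hmem₀)
    have hamem : a ∈ L := by rw [hLe]; exact List.mem_cons_self (a := a) (l := t)
    have hafil := List.mem_filter.mp (hL ▸ hamem)
    have han : a < n + 1 := List.mem_range.mp hafil.1
    have hapred := hafil.2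
    simp only [decide_eq_true_iff] at hapred
    have hge : m₀ ≤ a := Nat.find_min' hex ⟨by omega, by omega⟩
    have hle : a ≤ m₀ := by
      rw [hLe] at hmem₀ hsort
      rcases List.mem_cons.mp hmem₀ with h | h
      · omega
      · exact le_of_lt ((List.pairwise_cons.mp hsort).1 _ h)
    rw [hLe]
    simp only [List.headD_cons]
    omega
  -- the contraction
  have hcon : contract n w =
      w.filter (fun x => decide (x ≠ m₀ ∧ x ≠ 2*n+1-m₀)) := by
    unfold contract
    rw [hbadeq]
  set keep : ℕ → Bool := fun x => decide (x ≠ m₀ ∧ x ≠ 2*n+1-m₀) with hkeep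
  -- negated keep counts exactly 2
  have hnk : w.countP (fun x => decide ¬(keep x = true)) = 2 := by
    have he : (fun x => decide ¬(keep x = true)) =
        (fun x : ℕ => decide (x = m₀ ∨ x = 2*n+1-m₀)) := by
      funext x
      rw [decide_eq_decide]
      simp [hkeep]
      tauto
    rw [he, countP_or_two w _ _ hzz, hcm₀, hcz]
  have hlensplit := List.length_eq_countP_add_countP keep (l := w)
  have hlenc : (contract n w).length = w.countP keep := by
    rw [hcon, ← List.countP_eq_length_filter]
  refine ⟨⟨?_, ?_⟩, ?_, ?_⟩
  · rw [hcon]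
    exact List.isChain_iff_pairwise.mpr (List.Pairwise.sublist (List.filter_sublist) hpw)
  · rw [hcon]
    intro x hx
    exact hmem x (List.mem_of_mem_filter hx)
  · -- admissibility
    intro m h1 h2
    rw [hN, hcon, List.countP_filter]
    by_cases hcase : m₀ ≤ m
    · have hs := countP_split w (fun x => decide (x ≤ m ∨ 2*n+1-m ≤ x)) keep
      have h2' : w.countP (fun x => decide (x ≤ m ∨ 2*n+1-m ≤ x) && !keep x) = 2 := by
        have he2 : ∀ x ∈ w, (decide (x ≤ m ∨ 2*n+1-m ≤ x) && !keep x) = true ↔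
            (decide (x = m₀ ∨ x = 2*n+1-m₀)) = true := by
          intro x hx
          have hb := hmem x hx
          simp only [hkeep, Bool.and_eq_true, Bool.not_eq_true', decide_eq_false_iff_not,
            decide_eq_true_iff]
          constructor
          · rintro ⟨-, h⟩; tauto
          · rintro (rfl | rfl)
            · exact ⟨by omega, by tauto⟩
            · exact ⟨by omega, by tauto⟩
        rw [List.countP_congr he2, countP_or_two w _ _ hzz, hcm₀, hcz]
      have hb := hbound m h1 h2
      rw [hN] at hb
      omega
    · have hup : Ncount n m w ≤ m := by
        have h := Nat.find_min hex (show m < m₀ by omega)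
        by_contra hc
        exact h ⟨by omega, by omega⟩
      rw [hN] at hup
      calc w.countP (fun x => decide (x ≤ m ∨ 2*n+1-m ≤ x) && keep x)
          ≤ w.countP (fun x => decide (x ≤ m ∨ 2*n+1-m ≤ x)) :=
            List.countP_mono_left (fun x _ h => by
              simp only [Bool.and_eq_true] at h; exact h.1)
        _ ≤ m := hup
  · rw [hlenc]
    omega
end
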